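/- (Normal form with compatible symmetry) Let A be a 2×2 matrix of Laurent polynomials over ℂ with compatible symmetry. Then there exist strongly invertible 2×2 matrices P and Q of Laurent polynomials, each with compatible symmetry, such that P(z)A(z)Q(z) = diag(e₁(z), e₂(z)) for some Laurent polynomials e₁, e₂ having symmetry. Moreover, if det A is not identically zero and A = E·diag(d₁,d₂)·F for some strongly invertible 2×2 matrices E, F of Laurent polynomials and Laurent polynomials d₁, d₂ with d₁ dividing d₂ in ℂ[z,z^{−1}], then for every z₀ ∈ ℂ∖{0} the unordered pair {mz(e₁,z₀), mz(e₂,z₀)} equals the unordered pair {mz(d₁,z₀), mz(d₂,z₀)}. -/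

import Mathlib

open LaurentPolynomial Matrix
open scoped Classical

noncomputable section

abbrev LP := LaurentPolynomial ℂ

namespace QT

/-- The coefficient of `z^k` in a Laurent polynomial. -/
def coeff (u : LP) (k : ℤ) : ℂ := (show ℤ →₀ ℂ from AddMonoidAlgebra.coeff u) k

/-- The Hermitian conjugate `u⋆(z) = Σ conj(u(k)) z^{-k}`. -/
def hstar (u : LP) : LP :=
  AddMonoidAlgebra.ofCoeff (show ℤ →₀ ℂ from
    Finsupp.mapDomain (fun k => -k)
      (Finsupp.mapRange (starRingEnd ℂ) (map_zero _) (show ℤ →₀ ℂ from AddMonoidAlgebra.coeff u)))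

/-- `u` has symmetry with type `ε z^c`, i.e. `u(k) = ε u(c-k)` for all `k`. -/
def SymT (u : LP) (ε : ℂ) (c : ℤ) : Prop := ∀ k : ℤ, coeff u k = ε * coeff u (c - k)

def Sgn (ε : ℂ) : Prop := ε = 1 ∨ ε = -1

/-- `u` has symmetry (with some type). -/
def HasSym (u : LP) : Prop := ∃ ε c, Sgn ε ∧ SymT u ε c

/-- The Laurent polynomial `z - a`. -/
def zsub (a : ℂ) : LP := T 1 - LaurentPolynomial.C a

/-- `m` is the multiplicity of `z₀` as a zero of `u`. -/
def mzIs (u : LP) (z₀ : ℂ) (m : ℕ) : Prop := zsub z₀ ^ m ∣ u ∧ ¬ zsub z₀ ^ (m + 1) ∣ u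

/-- The multiplicity of `z₀` as a zero of `u`, as a function. -/
def mzF (u : LP) (z₀ : ℂ) : ℕ := sSup {m : ℕ | zsub z₀ ^ m ∣ u}

/-- The difference-of-(Hermitian)-squares property with respect to symmetry type `ε z^c`. -/
def DOS (u : LP) (ε : ℂ) (c : ℤ) : Prop :=
  ∃ (u₁ u₂ : LP) (ε₁ ε₂ : ℂ) (c₁ c₂ : ℤ),
    Sgn ε₁ ∧ Sgn ε₂ ∧ SymT u₁ ε₁ c₁ ∧ SymT u₂ ε₂ c₂ ∧
    u₁ * hstar u₁ - u₂ * hstar u₂ = u ∧ ε₁ * ε₂ = ε ∧ c₁ - c₂ = c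

/-- Degree: the largest exponent with nonzero coefficient (0 for the zero polynomial). -/
def degL (u : LP) : ℤ :=
  if h : u = 0 then 0
  else (show ℤ →₀ ℂ from AddMonoidAlgebra.coeff u).support.max'
    (Finsupp.support_nonempty_iff.mpr (fun h' => h (congrArg AddMonoidAlgebra.ofCoeff h')))

/-- Lower degree: the smallest exponent with nonzero coefficient (0 for zero). -/
def ldegL (u : LP) : ℤ :=
  if h : u = 0 then 0
  else (show ℤ →₀ ℂ from AddMonoidAlgebra.coeff u).support.min'
    (Finsupp.support_nonempty_iff.mpr (fun h' => h (congrArg AddMonoidAlgebra.ofCoeff h')))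

/-- Length `deg - ldeg`, with `len 0 = ⊥`. -/
def lenL (u : LP) : WithBot ℤ := if u = 0 then ⊥ else ((degL u - ldegL u : ℤ) : WithBot ℤ)

/-- `g` is a greatest common divisor of `a` and `b`. -/
def IsGCD2 (g a b : LP) : Prop := g ∣ a ∧ g ∣ b ∧ ∀ e : LP, e ∣ a → e ∣ b → e ∣ g

/-- `g` is a greatest common divisor of `a`, `b`, `c`, `d`. -/
def IsGCD4 (g a b c d : LP) : Prop :=
  g ∣ a ∧ g ∣ b ∧ g ∣ c ∧ g ∣ d ∧ ∀ e : LP, e ∣ a → e ∣ b → e ∣ c → e ∣ d → e ∣ g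

/-- The Hermitian conjugate transpose of a matrix of Laurent polynomials. -/
def hstarM (A : Matrix (Fin 2) (Fin 2) LP) : Matrix (Fin 2) (Fin 2) LP :=
  fun i j => hstar (A j i)

def IsHerm (A : Matrix (Fin 2) (Fin 2) LP) : Prop := hstarM A = A

/-- `diag(1, -1)`. -/
def Jmat : Matrix (Fin 2) (Fin 2) LP := Matrix.diagonal ![1, -1]

/-- A square matrix of Laurent polynomials is strongly invertible if its determinant is a
nonzero monomial. -/
def StrongInv (A : Matrix (Fin 2) (Fin 2) LP) : Prop :=
  ∃ (lam : ℂ) (k : ℤ), lam ≠ 0 ∧ A.det = LaurentPolynomial.C lam * T k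

/-- Compatible symmetry for a `2×2` matrix of Laurent polynomials. -/
def CompatSym (A : Matrix (Fin 2) (Fin 2) LP) : Prop :=
  ∃ (ε ε' : Fin 2 → ℂ) (c c' : Fin 2 → ℤ),
    (∀ j, Sgn (ε j)) ∧ (∀ k, Sgn (ε' k)) ∧
    ∀ j k, SymT (A j k) (ε j * ε' k) (c' k - c j)

/-- Substitution `z ↦ z²`. -/
def sqDom (u : LP) : LP :=
  AddMonoidAlgebra.ofCoeff (show ℤ →₀ ℂ from
    Finsupp.mapDomain (fun k => 2 * k) (show ℤ →₀ ℂ from AddMonoidAlgebra.coeff u))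

/-- Substitution `z ↦ -z`. -/
def negSub (u : LP) : LP :=
  (show ℤ →₀ ℂ from AddMonoidAlgebra.coeff u).sum fun k c =>
    show LP from AddMonoidAlgebra.ofCoeff (Finsupp.single k ((-1 : ℂ) ^ k * c))

/-- The `γ`-coset `u^{[γ]}(z) = Σ_k u(γ + 2k) z^k`. -/
def cosetL (u : LP) (γ : ℤ) : LP :=
  AddMonoidAlgebra.ofCoeff (show ℤ →₀ ℂ from
    Finsupp.comapDomain (fun k : ℤ => γ + 2 * k) (show ℤ →₀ ℂ from AddMonoidAlgebra.coeff u)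
      (by intro a _ b _ h; simp only at h; omega))

/-- Evaluation of a Laurent polynomial at a point. -/
def evalL (u : LP) (z : ℂ) : ℂ := (show ℤ →₀ ℂ from AddMonoidAlgebra.coeff u).sum fun k c => c * z ^ k

/-- `{a; b₁, b₂}_{Θ,(1,-1)}` is a quasi-tight framelet filter bank. -/
def QTFB (a Θ b₁ b₂ : LP) : Prop :=
  sqDom Θ * hstar a * a + hstar b₁ * b₁ - hstar b₂ * b₂ = Θ ∧
  sqDom Θ * hstar a * negSub a + hstar b₁ * negSub b₁ - hstar b₂ * negSub b₂ = 0

/-- The matrix `N_{a,Θ|n_b}` built from the quotients `A`, `B`. -/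
def Nmat (A B : LP) : Matrix (Fin 2) (Fin 2) LP :=
  LaurentPolynomial.C (2 : ℂ)⁻¹ •
    !![cosetL A 0 + cosetL B 0, cosetL A 1 - cosetL B 1;
       T 1 * (cosetL A 1 + cosetL B 1), cosetL A 0 - cosetL B 0]

/-! ### Auxiliary development -/

/-- Negation as an additive monoid hom on `ℤ`. -/
def negh : ℤ →+ ℤ := AddMonoidHom.mk' (fun k => -k) (fun a b => by ring)

/-- The ring involution `z ↦ z⁻¹` on Laurent polynomials. -/
def invo : LP →+* LP := AddMonoidAlgebra.mapDomainRingHom ℂ negh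

lemma invo_def (u : LP) : invo u = AddMonoidAlgebra.ofCoeff (Finsupp.mapDomain (fun k => -k) u.coeff) := rfl

lemma invo_apply (u : LP) (k : ℤ) : coeff (invo u) k = coeff u (-k) := by
  show (Finsupp.mapDomain (fun k : ℤ => -k) u.coeff) k = _
  have h : k = -(-k) := by ring
  conv_lhs => rw [h]
  rw [Finsupp.mapDomain_apply (fun a b h => by simpa using h)]
  rfl

lemma invo_invo (u : LP) : invo (invo u) = u := by
  apply AddMonoidAlgebra.ext
  apply Finsupp.ext
  intro k
  have := invo_apply (invo u) k
  rw [invo_apply u (-k), neg_neg] at this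
  exact this

lemma invo_single (c : ℤ) (ε : ℂ) :
    invo (AddMonoidAlgebra.single c ε : LP) = AddMonoidAlgebra.single (-c) ε := by
  rw [invo_def, AddMonoidAlgebra.coeff_single, Finsupp.mapDomain_single]
  rfl

lemma invo_C (a : ℂ) : invo (LaurentPolynomial.C a) = LaurentPolynomial.C a := by
  have h : (LaurentPolynomial.C a : LP) = AddMonoidAlgebra.single 0 a := by
    rw [single_eq_C_mul_T]; simp
  rw [h, invo_single, neg_zero]

lemma invo_T (n : ℤ) : invo (T n : LP) = T (-n) := by
  show invo (AddMonoidAlgebra.single n 1) = _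
  rw [invo_single]; rfl

/-- Functional form of symmetry. -/
def Sy (ε : ℂ) (c : ℤ) (u : LP) : Prop :=
  u = LaurentPolynomial.C ε * T c * invo u

lemma symT_iff_sy (u : LP) (ε : ℂ) (c : ℤ) : SymT u ε c ↔ Sy ε c u := by
  have key : ∀ k : ℤ, ((LaurentPolynomial.C ε * T c : LP) * invo u).coeff k
      = ε * coeff u (c - k) := by
    intro k
    rw [← single_eq_C_mul_T]
    have h1 := AddMonoidAlgebra.coeff_single_mul_apply (invo u) ε c k
    have h2 : coeff (invo u) (-c + k) = coeff u (c - k) := by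
      rw [invo_apply]; congr 1; ring
    rw [h1]
    exact congrArg (ε * ·) h2
  constructor
  · intro h
    apply AddMonoidAlgebra.ext
    apply Finsupp.ext
    intro k
    rw [key k]
    exact h k
  · intro h k
    have h2 : coeff u k = ((LaurentPolynomial.C ε * T c : LP) * invo u).coeff k := by
      rw [← h]; rfl
    rw [h2, key k]

lemma sy_zero (ε : ℂ) (c : ℤ) : Sy ε c (0 : LP) := by
  show (0 : LP) = _
  rw [map_zero, mul_zero]

lemma sy_add {ε : ℂ} {c : ℤ} {u v : LP} (hu : Sy ε c u) (hv : Sy ε c v) :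
    Sy ε c (u + v) := by
  show u + v = _
  rw [map_add, mul_add, ← hu, ← hv]

lemma sy_neg {ε : ℂ} {c : ℤ} {u : LP} (hu : Sy ε c u) : Sy ε c (-u) := by
  show -u = _
  rw [map_neg, mul_neg, ← hu]

lemma sy_smul {ε : ℂ} {c : ℤ} (a : ℂ) {u : LP} (hu : Sy ε c u) :
    Sy ε c (LaurentPolynomial.C a * u) := by
  show LaurentPolynomial.C a * u = _
  rw [_root_.map_mul, invo_C]
  calc LaurentPolynomial.C a * u
      = LaurentPolynomial.C a * (LaurentPolynomial.C ε * T c * invo u) := by rw [← hu]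
    _ = LaurentPolynomial.C ε * T c * (LaurentPolynomial.C a * invo u) := by ring

lemma sy_mul {ε₁ ε₂ : ℂ} {c₁ c₂ : ℤ} {u v : LP} (hu : Sy ε₁ c₁ u) (hv : Sy ε₂ c₂ v) :
    Sy (ε₁ * ε₂) (c₁ + c₂) (u * v) := by
  show u * v = _
  rw [show invo (u * v) = invo u * invo v from _root_.map_mul invo u v]
  rw [show LaurentPolynomial.C (ε₁ * ε₂) = LaurentPolynomial.C ε₁ * LaurentPolynomial.C ε₂
        from _root_.map_mul _ ε₁ ε₂, T_add]
  conv_lhs => rw [hu, hv]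
  ring

lemma sgn_mul {a b : ℂ} (ha : Sgn a) (hb : Sgn b) : Sgn (a * b) := by
  rcases ha with h | h <;> rcases hb with h' | h' <;> simp [Sgn, h, h']

lemma sgn_ne_zero {a : ℂ} (ha : Sgn a) : a ≠ 0 := by
  rcases ha with h | h <;> simp [h]

lemma sgn_sq {a : ℂ} (ha : Sgn a) : a * a = 1 := by
  rcases ha with h | h <;> simp [h]

lemma invo_eq_of_sy {ε : ℂ} {c : ℤ} {u : LP} (hs : Sgn ε) (hu : Sy ε c u) :
    invo u = LaurentPolynomial.C ε * T (-c) * u := by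
  conv_rhs => rw [hu]
  have h : LaurentPolynomial.C ε * T (-c) * (LaurentPolynomial.C ε * T c * invo u)
      = (LaurentPolynomial.C ε * LaurentPolynomial.C ε) * (T (-c) * T c) * invo u := by ring
  rw [h, ← _root_.map_mul, sgn_sq hs, ← T_add, neg_add_cancel, T_zero]
  simp

/-- Quotient of symmetric by symmetric is symmetric. -/
lemma sy_of_mul_left {εu εv : ℂ} {cu cv : ℤ} {u v w : LP} (hv : v ≠ 0)
    (hsv : Sgn εv) (hu : Sy εu cu u) (hvv : Sy εv cv v) (hw : u = v * w) :
    Sy (εu * εv) (cu - cv) w := by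
  have h1 : v * w = LaurentPolynomial.C εu * T cu * (invo v * invo w) := by
    rw [← _root_.map_mul, ← hw]; exact hu
  rw [invo_eq_of_sy hsv hvv] at h1
  have h2 : v * w = v * (LaurentPolynomial.C (εu * εv) * T (cu - cv) * invo w) := by
    rw [h1, _root_.map_mul, T_sub]
    ring
  show w = _
  exact mul_left_cancel₀ hv h2

/-! ### Reduced representation `u = toLaurent p * T n` with `X ∤ p` -/

lemma exists_red {u : LP} (hu : u ≠ 0) :
    ∃ (p : Polynomial ℂ) (n : ℤ), ¬ (Polynomial.X ∣ p) ∧ u = Polynomial.toLaurent p * T n := by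
  obtain ⟨m, q, hq⟩ := exists_T_pow u
  have hq0 : q ≠ 0 := by
    rintro rfl
    simp only [map_zero] at hq
    apply hu
    have h5 := congrArg (· * T (-(m : ℤ))) hq
    simp only [zero_mul, mul_T_assoc, add_neg_cancel, T_zero, mul_one] at h5
    exact h5.symm
  have hfin : FiniteMultiplicity (Polynomial.X : Polynomial ℂ) q := by
    have := Polynomial.finiteMultiplicity_X_sub_C (0 : ℂ) hq0
    simpa using this
  obtain ⟨c, hc, hxc⟩ := hfin.exists_eq_pow_mul_and_not_dvd
  refine ⟨c, (multiplicity Polynomial.X q : ℤ) - m, hxc, ?_⟩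
  have h1 : Polynomial.toLaurent q = Polynomial.toLaurent c * T (multiplicity Polynomial.X q) := by
    conv_lhs => rw [hc]
    rw [_root_.map_mul, Polynomial.toLaurent_X_pow, mul_comm]
  have h2 : u * T m = Polynomial.toLaurent c * T (multiplicity Polynomial.X q) := by
    rw [← hq, h1]
  have h6 := congrArg (· * T (-(m : ℤ))) h2
  simp only [mul_T_assoc, add_neg_cancel, T_zero, mul_one] at h6
  rw [sub_eq_add_neg]
  exact h6

lemma red_unique {p q : Polynomial ℂ} {n m : ℤ}
    (hp : ¬ (Polynomial.X ∣ p)) (hq : ¬ (Polynomial.X ∣ q))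
    (h : Polynomial.toLaurent p * T n = Polynomial.toLaurent q * T m) :
    p = q ∧ n = m := by
  -- reduce to the case n ≥ m by symmetry
  have key : ∀ (p q : Polynomial ℂ) (n m : ℤ), ¬ (Polynomial.X ∣ p) → ¬ (Polynomial.X ∣ q) →
      m ≤ n → Polynomial.toLaurent p * T n = Polynomial.toLaurent q * T m → p = q ∧ n = m := by
    intro p q n m hp hq hmn h
    have h2 : Polynomial.toLaurent p * T (n - m) = Polynomial.toLaurent q := by
      have h5 := congrArg (· * T (-m)) h
      simp only [mul_T_assoc, add_neg_cancel, T_zero, mul_one] at h5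
      rw [sub_eq_add_neg]
      exact h5
    set d : ℕ := (n - m).toNat with hd
    have hdeq : (d : ℤ) = n - m := Int.toNat_of_nonneg (by omega)
    have h3 : Polynomial.toLaurent (p * Polynomial.X ^ d) = Polynomial.toLaurent q := by
      rw [_root_.map_mul, Polynomial.toLaurent_X_pow, hdeq]
      exact h2
    have h4 : p * Polynomial.X ^ d = q := Polynomial.toLaurent_injective h3
    have hd0 : d = 0 := by
      by_contra hd0
      apply hq
      obtain ⟨e, he⟩ : ∃ e, d = e + 1 := ⟨d - 1, by omega⟩
      exact ⟨p * Polynomial.X ^ e, by rw [← h4, he]; ring⟩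
    constructor
    · rw [← h4, hd0, pow_zero, mul_one]
    · omega
  rcases le_or_gt m n with hle | hlt
  · exact key p q n m hp hq hle h
  · obtain ⟨h1, h2⟩ := key q p m n hq hp (le_of_lt hlt) h.symm
    exact ⟨h1.symm, h2.symm⟩

/-- The reduced polynomial part of a nonzero Laurent polynomial. -/
def redP (u : LP) : Polynomial ℂ :=
  if hu : u = 0 then 0 else (exists_red hu).choose

def redE (u : LP) : ℤ :=
  if hu : u = 0 then 0 else (exists_red hu).choose_spec.choose

lemma redP_spec {u : LP} (hu : u ≠ 0) :
    ¬ (Polynomial.X ∣ redP u) ∧ u = Polynomial.toLaurent (redP u) * T (redE u) := by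
  rw [redP, redE, dif_neg hu, dif_neg hu]
  exact (exists_red hu).choose_spec.choose_spec

lemma redP_eq {u : LP} {p : Polynomial ℂ} {n : ℤ} (hu : u ≠ 0)
    (hp : ¬ (Polynomial.X ∣ p)) (h : u = Polynomial.toLaurent p * T n) :
    redP u = p ∧ redE u = n := by
  have h1 := redP_spec hu
  have := red_unique h1.1 hp (by rw [← h1.2, ← h])
  exact ⟨this.1, this.2⟩

/-- Measure: degree of the reduced polynomial part. -/
def meas (u : LP) : ℕ := (redP u).natDegree

lemma meas_mul {u v : LP} (hu : u ≠ 0) (hv : v ≠ 0) :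
    meas (u * v) = meas u + meas v := by
  have hu1 := redP_spec hu
  have hv1 := redP_spec hv
  have huv : u * v ≠ 0 := mul_ne_zero hu hv
  have hx : ¬ (Polynomial.X ∣ redP u * redP v) := by
    intro h
    rcases (Polynomial.prime_X (R := ℂ)).2.2 _ _ h with h1 | h1
    · exact hu1.1 h1
    · exact hv1.1 h1
  have h2 : u * v = Polynomial.toLaurent (redP u * redP v) * T (redE u + redE v) := by
    rw [_root_.map_mul, T_add]
    conv_lhs => rw [hu1.2, hv1.2]
    ring
  have h3 := redP_eq huv hx h2
  rw [meas, h3.1, Polynomial.natDegree_mul (fun h => hu1.1 (by rw [h]; exact dvd_zero _))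
    (fun h => hv1.1 (by rw [h]; exact dvd_zero _))]
  rfl

lemma meas_monomial (a : ℂ) (ha : a ≠ 0) (n : ℤ) :
    meas (LaurentPolynomial.C a * T n) = 0 := by
  have hne : (LaurentPolynomial.C a * T n : LP) ≠ 0 := by
    rw [← single_eq_C_mul_T]
    intro h
    exact ha (by simpa using (AddMonoidAlgebra.single_eq_zero).mp h)
  have hx : ¬ (Polynomial.X ∣ (Polynomial.C a : Polynomial ℂ)) := by
    intro h
    have := Polynomial.natDegree_le_of_dvd h (by simpa using ha)
    simp [Polynomial.natDegree_X] at this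
  have := redP_eq hne hx (by rw [Polynomial.toLaurent_C])
  rw [meas, this.1, Polynomial.natDegree_C]

lemma eq_monomial_of_meas_zero {u : LP} (hu : u ≠ 0) (h : meas u = 0) :
    ∃ (a : ℂ) (n : ℤ), a ≠ 0 ∧ u = LaurentPolynomial.C a * T n := by
  have h1 := redP_spec hu
  obtain ⟨a, ha⟩ := Polynomial.natDegree_eq_zero.mp h
  refine ⟨a, redE u, ?_, ?_⟩
  · intro h3
    apply h1.1
    rw [← ha, h3]
    simp
  · conv_lhs => rw [h1.2]
    rw [← ha, Polynomial.toLaurent_C]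

lemma monomial_dvd (a : ℂ) (ha : a ≠ 0) (n : ℤ) (v : LP) :
    LaurentPolynomial.C a * T n ∣ v := by
  refine ⟨LaurentPolynomial.C a⁻¹ * T (-n) * v, ?_⟩
  have : (LaurentPolynomial.C a * T n : LP) * (LaurentPolynomial.C a⁻¹ * T (-n) * v)
      = (LaurentPolynomial.C a * LaurentPolynomial.C a⁻¹) * (T n * T (-n)) * v := by ring
  rw [this, ← _root_.map_mul, mul_inv_cancel₀ ha, ← T_add, add_neg_cancel, T_zero]
  simp

lemma unit_is_monomial {u v : LP} (h : u * v = 1) :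
    ∃ (a : ℂ) (n : ℤ), a ≠ 0 ∧ u = LaurentPolynomial.C a * T n := by
  have hu : u ≠ 0 := by rintro rfl; simp at h
  have hv : v ≠ 0 := by rintro rfl; simp at h
  have h1 : meas (u * v) = 0 := by
    rw [h]
    have : (1 : LP) = LaurentPolynomial.C 1 * T 0 := by simp
    rw [this]
    exact meas_monomial 1 one_ne_zero 0
  rw [meas_mul hu hv] at h1
  exact eq_monomial_of_meas_zero hu (by omega)

/-- If `g` divides `x`, `x ≠ 0` and their measures agree, then `x` divides `g`. -/
lemma dvd_of_dvd_of_meas_eq {g x : LP} (hx : x ≠ 0) (hdvd : g ∣ x) (hm : meas g = meas x) :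
    x ∣ g := by
  obtain ⟨w, hw⟩ := hdvd
  have hg : g ≠ 0 := by rintro rfl; simp at hw; exact hx hw
  have hwne : w ≠ 0 := by rintro rfl; rw [mul_zero] at hw; exact hx hw
  have := meas_mul hg hwne
  rw [← hw, hm] at this
  obtain ⟨a, n, ha, hman⟩ := eq_monomial_of_meas_zero hwne (by omega)
  refine ⟨LaurentPolynomial.C a⁻¹ * T (-n), ?_⟩
  rw [hw, hman]
  have : g * (LaurentPolynomial.C a * T n) * (LaurentPolynomial.C a⁻¹ * T (-n))
      = g * ((LaurentPolynomial.C a * LaurentPolynomial.C a⁻¹) * (T n * T (-n))) := by ring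
  rw [this, ← _root_.map_mul, mul_inv_cancel₀ ha, ← T_add, add_neg_cancel, T_zero]
  simp

/-! ### The prime `z - z₀` -/

lemma coeff_zsub (z₀ : ℂ) (k : ℤ) :
    coeff (zsub z₀) k = (if (1 : ℤ) = k then (1 : ℂ) else 0) - (if (0 : ℤ) = k then z₀ else 0) := by
  show ((T 1 : LP) - LaurentPolynomial.C z₀).coeff k = _
  rw [AddMonoidAlgebra.coeff_sub, Finsupp.sub_apply]
  congr 1
  · exact T_apply k 1
  · show (AddMonoidAlgebra.single 0 z₀ : LP).coeff k = _
    exact Finsupp.single_apply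

lemma zsub_ne_zero (z₀ : ℂ) : zsub z₀ ≠ 0 := by
  intro h
  have := coeff_zsub z₀ 1
  rw [h] at this
  simp [coeff] at this

lemma zsub_eq_toLaurent (z₀ : ℂ) :
    zsub z₀ = Polynomial.toLaurent (Polynomial.X - Polynomial.C z₀) := by
  rw [map_sub, Polynomial.toLaurent_X, Polynomial.toLaurent_C]
  rfl

lemma dvd_of_dvd_mul_T {d u : LP} (n : ℤ) (h : d ∣ u * T n) : d ∣ u := by
  obtain ⟨w, hw⟩ := h
  refine ⟨w * T (-n), ?_⟩
  have := congrArg (· * T (-n)) hw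
  simp only [mul_T_assoc, add_neg_cancel, T_zero, mul_one] at this
  rw [this]; ring

lemma zsub_dvd_toLaurent {z₀ : ℂ} (hz : z₀ ≠ 0) {r : Polynomial ℂ}
    (h : zsub z₀ ∣ Polynomial.toLaurent r) : (Polynomial.X - Polynomial.C z₀) ∣ r := by
  obtain ⟨w, hw⟩ := h
  obtain ⟨k, s, hs⟩ := exists_T_pow w
  have h1 : Polynomial.toLaurent (r * Polynomial.X ^ k)
      = Polynomial.toLaurent ((Polynomial.X - Polynomial.C z₀) * s) := by
    rw [_root_.map_mul, _root_.map_mul, Polynomial.toLaurent_X_pow, ← zsub_eq_toLaurent, hs, hw]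
    ring
  have h2 : r * Polynomial.X ^ k = (Polynomial.X - Polynomial.C z₀) * s :=
    Polynomial.toLaurent_injective h1
  have hprime := Polynomial.prime_X_sub_C (R := ℂ) z₀
  rcases hprime.2.2 r (Polynomial.X ^ k) ⟨s, h2⟩ with h3 | h3
  · exact h3
  · exfalso
    have h4 := hprime.dvd_of_dvd_pow h3
    obtain ⟨c, hc⟩ := h4
    have := congrArg (Polynomial.eval z₀) hc
    simp at this
    exact hz this


lemma zsub_prime {z₀ : ℂ} (hz : z₀ ≠ 0) : Prime (zsub z₀) := by
  refine ⟨zsub_ne_zero z₀, ?_, ?_⟩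
  · intro hunit
    obtain ⟨w, hw⟩ := isUnit_iff_exists_inv.mp hunit
    obtain ⟨a, n, ha, hmon⟩ := unit_is_monomial hw
    have h1 := coeff_zsub z₀ 1
    have h0 := coeff_zsub z₀ 0
    rw [hmon] at h1 h0
    rw [show (LaurentPolynomial.C a * T n : LP) = AddMonoidAlgebra.single n a from
      (single_eq_C_mul_T a n).symm] at h1 h0
    rw [show coeff (AddMonoidAlgebra.single n a : LP) 1 = if n = 1 then a else 0 from Finsupp.single_apply] at h1
    rw [show coeff (AddMonoidAlgebra.single n a : LP) 0 = if n = 0 then a else 0 from Finsupp.single_apply] at h0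
    by_cases hn1 : n = 1
    · rw [if_pos hn1] at h1
      rw [hn1] at h0
      simp at h0
      exact hz h0
    · rw [if_neg hn1] at h1
      simp at h1
  · intro u v huv
    obtain ⟨ku, pu, hpu⟩ := exists_T_pow u
    obtain ⟨kv, pv, hpv⟩ := exists_T_pow v
    have h1 : zsub z₀ ∣ Polynomial.toLaurent (pu * pv) := by
      rw [_root_.map_mul, hpu, hpv]
      have : u * T ku * (v * T kv) = u * v * T (ku + kv) := by
        rw [T_add]; ring
      rw [this]
      exact huv.mul_right (T (ku + kv))
    have h2 := zsub_dvd_toLaurent hz h1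
    rcases (Polynomial.prime_X_sub_C (R := ℂ) z₀).2.2 pu pv h2 with h3 | h3
    · left
      have : zsub z₀ ∣ Polynomial.toLaurent pu := by
        rw [zsub_eq_toLaurent]
        exact map_dvd _ h3
      rw [hpu] at this
      exact dvd_of_dvd_mul_T _ this
    · right
      have : zsub z₀ ∣ Polynomial.toLaurent pv := by
        rw [zsub_eq_toLaurent]
        exact map_dvd _ h3
      rw [hpv] at this
      exact dvd_of_dvd_mul_T _ this

lemma mzIs_mul {z₀ : ℂ} (hz : z₀ ≠ 0) {u v : LP} {m n : ℕ}
    (hu : mzIs u z₀ m) (hv : mzIs v z₀ n) : mzIs (u * v) z₀ (m + n) := by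
  obtain ⟨⟨u', hu'⟩, hu2⟩ := hu
  obtain ⟨⟨v', hv'⟩, hv2⟩ := hv
  have hpu' : ¬ zsub z₀ ∣ u' := by
    intro ⟨w, hw⟩
    exact hu2 ⟨w, by rw [hu', hw, pow_succ]; ring⟩
  have hpv' : ¬ zsub z₀ ∣ v' := by
    intro ⟨w, hw⟩
    exact hv2 ⟨w, by rw [hv', hw, pow_succ]; ring⟩
  constructor
  · exact ⟨u' * v', by rw [hu', hv', pow_add]; ring⟩
  · intro ⟨w, hw⟩
    have hne : (zsub z₀) ^ (m + n) ≠ (0 : LP) := pow_ne_zero _ (zsub_ne_zero z₀)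
    have h1 : (zsub z₀ : LP) ^ (m + n) * (u' * v') = (zsub z₀) ^ (m+n) * (zsub z₀ * w) := by
      have e1 : (zsub z₀ : LP) ^ (m + n) * (u' * v') = u * v := by
        rw [hu', hv', pow_add]; ring
      have e2 : (zsub z₀ : LP) ^ (m+n) * (zsub z₀ * w) = zsub z₀ ^ (m + n + 1) * w := by
        rw [pow_succ]; ring
      rw [e1, e2, hw]
    have h2 : u' * v' = zsub z₀ * w := mul_left_cancel₀ hne h1
    rcases (zsub_prime hz).2.2 u' v' ⟨w, h2⟩ with h3 | h3
    · exact hpu' h3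
    · exact hpv' h3

lemma mzIs_unique {z₀ : ℂ} {u : LP} {m n : ℕ} (hm : mzIs u z₀ m) (hn : mzIs u z₀ n) :
    m = n := by
  by_contra h
  rcases Nat.lt_or_ge m n with h1 | h1
  · exact hm.2 ((pow_dvd_pow _ (by omega)).trans hn.1)
  · exact hn.2 ((pow_dvd_pow _ (by omega)).trans hm.1)

lemma mzIs_monomial_mul {z₀ : ℂ} {u : LP} {m : ℕ} (a : ℂ) (ha : a ≠ 0) (k : ℤ)
    (h : mzIs u z₀ m) : mzIs (LaurentPolynomial.C a * T k * u) z₀ m := by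
  constructor
  · exact h.1.trans (Dvd.intro_left _ rfl)
  · intro hdvd
    apply h.2
    obtain ⟨w, hw⟩ := hdvd
    refine ⟨LaurentPolynomial.C a⁻¹ * T (-k) * w, ?_⟩
    have h2 := congrArg (fun x => LaurentPolynomial.C a⁻¹ * T (-k) * x) hw
    have h3 : LaurentPolynomial.C a⁻¹ * T (-k) * (LaurentPolynomial.C a * T k * u) = u := by
      have : LaurentPolynomial.C a⁻¹ * T (-k) * (LaurentPolynomial.C a * T k * u)
          = (LaurentPolynomial.C a⁻¹ * LaurentPolynomial.C a) * (T (-k) * T k) * u := by ring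
      rw [this, ← _root_.map_mul, inv_mul_cancel₀ ha, ← T_add, neg_add_cancel, T_zero]
      simp
    rw [h3] at h2
    rw [h2]
    ring


/-! ### Bezout gcds with symmetry -/

lemma CT_mul_CT (x y : ℂ) (m n : ℤ) :
    (LaurentPolynomial.C x * T m) * (LaurentPolynomial.C y * T n) =
      LaurentPolynomial.C (x * y) * T (m + n) := by
  rw [_root_.map_mul, T_add]; ring

lemma C_mul_cancel {μ : ℂ} {g : LP} (hg : g ≠ 0) (h : LaurentPolynomial.C μ * g = g) :
    μ = 1 := by
  have h1 : (LaurentPolynomial.C μ - LaurentPolynomial.C 1) * g = 0 := by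
    rw [sub_mul, h]
    simp
  rcases mul_eq_zero.mp h1 with h2 | h2
  · have h3 : LaurentPolynomial.C (μ - 1) = 0 := by rw [map_sub]; exact h2
    have h4 : (AddMonoidAlgebra.single 0 (μ - 1) : LP) = 0 := by
      rw [single_eq_C_mul_T]
      simpa using h3
    have := AddMonoidAlgebra.single_eq_zero.mp h4
    linear_combination this
  · exact absurd h2 hg

lemma exists_bezout_gcd (a b : LP) :
    ∃ g u v : LP, g ∣ a ∧ g ∣ b ∧ u * a + v * b = g ∧ ((a ≠ 0 ∨ b ≠ 0) → g ≠ 0) := by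
  obtain ⟨i, p, hp⟩ := exists_T_pow a
  obtain ⟨j, q, hq⟩ := exists_T_pow b
  have hpa : a = Polynomial.toLaurent p * T (-(i:ℤ)) := by
    rw [hp]
    simp only [mul_T_assoc, add_neg_cancel, T_zero, mul_one]
  have hqb : b = Polynomial.toLaurent q * T (-(j:ℤ)) := by
    rw [hq]
    simp only [mul_T_assoc, add_neg_cancel, T_zero, mul_one]
  set G := EuclideanDomain.gcd p q with hG
  refine ⟨Polynomial.toLaurent G,
    Polynomial.toLaurent (EuclideanDomain.gcdA p q) * T i,
    Polynomial.toLaurent (EuclideanDomain.gcdB p q) * T j, ?_, ?_, ?_, ?_⟩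
  · obtain ⟨w, hw⟩ := EuclideanDomain.gcd_dvd_left p q
    exact ⟨Polynomial.toLaurent w * T (-(i:ℤ)), by
      rw [hpa, hw, _root_.map_mul]; ring⟩
  · obtain ⟨w, hw⟩ := EuclideanDomain.gcd_dvd_right p q
    exact ⟨Polynomial.toLaurent w * T (-(j:ℤ)), by
      rw [hqb, hw, _root_.map_mul]; ring⟩
  · have h1 := EuclideanDomain.gcd_eq_gcd_ab p q
    have h2 := congrArg (Polynomial.toLaurent (R := ℂ)) h1
    rw [map_add, _root_.map_mul, _root_.map_mul] at h2
    rw [h2, hpa, hqb]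
    have e : ∀ (x y : LP) (m : ℕ), (x * T (m:ℤ)) * (y * T (-(m:ℤ))) = y * x := by
      intro x y m
      have h9 : (x * T (m:ℤ)) * (y * T (-(m:ℤ))) = x * y * (T (m:ℤ) * T (-(m:ℤ))) := by ring
      rw [h9, ← T_add, add_neg_cancel, T_zero, mul_one]
      ring
    rw [e, e]
  · intro hab
    rw [Polynomial.toLaurent_ne_zero]
    intro hG0
    rcases EuclideanDomain.gcd_eq_zero_iff.mp hG0 with ⟨hp0, hq0⟩
    rcases hab with h | h
    · exact h (by rw [hpa, hp0]; simp)
    · exact h (by rw [hqb, hq0]; simp)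

lemma sy_dvd_invo {εa : ℂ} {ca : ℤ} {g x : LP} (h : g ∣ x) :
    LaurentPolynomial.C εa * T ca * invo g ∣ LaurentPolynomial.C εa * T ca * invo x := by
  obtain ⟨w, hw⟩ := h
  exact ⟨invo w, by rw [hw, _root_.map_mul]; ring⟩


lemma sy_average (ε : ℂ) (c : ℤ) (hsq : ε * ε = 1) (u₀ : LP) :
    Sy ε c (LaurentPolynomial.C (2⁻¹:ℂ) * (u₀ + LaurentPolynomial.C ε * T c * invo u₀)) := by
  show _ = _
  rw [show invo (LaurentPolynomial.C (2⁻¹:ℂ) * (u₀ + LaurentPolynomial.C ε * T c * invo u₀))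
      = LaurentPolynomial.C (2⁻¹:ℂ) * (invo u₀ + LaurentPolynomial.C ε * T (-c) * u₀) from by
    rw [_root_.map_mul invo, invo_C, map_add invo, _root_.map_mul invo,
      _root_.map_mul invo, invo_C, invo_T, invo_invo]]
  have h1 : LaurentPolynomial.C ε * T c * (LaurentPolynomial.C (2⁻¹:ℂ) *
      (invo u₀ + LaurentPolynomial.C ε * T (-c) * u₀))
      = LaurentPolynomial.C (2⁻¹:ℂ) * (LaurentPolynomial.C ε * T c * invo u₀
        + ((LaurentPolynomial.C ε * T c) * (LaurentPolynomial.C ε * T (-c))) * u₀) := by ring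
  rw [h1, CT_mul_CT, hsq, add_neg_cancel, T_zero]
  have h2 : (LaurentPolynomial.C (1:ℂ) * 1 : LP) = 1 := by simp
  rw [h2, one_mul]
  ring

lemma sym_bezout_coeffs {a b g u₀ v₀ : LP} {εa εb εg : ℂ} {ca cb cg : ℤ}
    (hsa : Sgn εa) (hsb : Sgn εb) (hsg : Sgn εg)
    (ha : Sy εa ca a) (hb : Sy εb cb b) (hg : Sy εg cg g)
    (hbez : u₀ * a + v₀ * b = g) :
    ∃ u v : LP, u * a + v * b = g ∧ Sy (εg * εa) (cg - ca) u ∧ Sy (εg * εb) (cg - cb) v := by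
  set u : LP := LaurentPolynomial.C (2⁻¹ : ℂ) *
    (u₀ + LaurentPolynomial.C (εg * εa) * T (cg - ca) * invo u₀) with hu
  set v : LP := LaurentPolynomial.C (2⁻¹ : ℂ) *
    (v₀ + LaurentPolynomial.C (εg * εb) * T (cg - cb) * invo v₀) with hv
  have hSua : (LaurentPolynomial.C (εg * εa) * T (cg - ca) * invo u₀) * a
      = LaurentPolynomial.C εg * T cg * invo (u₀ * a) := by
    conv_lhs => rw [ha]
    rw [show invo (u₀ * a) = invo u₀ * invo a from _root_.map_mul invo u₀ a]
    have h1 : LaurentPolynomial.C (εg * εa) * T (cg - ca) * invo u₀ *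
        (LaurentPolynomial.C εa * T ca * invo a)
        = ((LaurentPolynomial.C (εg*εa) * T (cg-ca)) * (LaurentPolynomial.C εa * T ca)) * (invo u₀ * invo a) := by
      ring
    rw [h1, CT_mul_CT, show εg * εa * εa = εg * (εa * εa) by ring, sgn_sq hsa,
      show cg - ca + ca = cg by ring, mul_one]
  have hSvb : (LaurentPolynomial.C (εg * εb) * T (cg - cb) * invo v₀) * b
      = LaurentPolynomial.C εg * T cg * invo (v₀ * b) := by
    conv_lhs => rw [hb]
    rw [show invo (v₀ * b) = invo v₀ * invo b from _root_.map_mul invo v₀ b]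
    have h1 : LaurentPolynomial.C (εg * εb) * T (cg - cb) * invo v₀ *
        (LaurentPolynomial.C εb * T cb * invo b)
        = ((LaurentPolynomial.C (εg*εb) * T (cg-cb)) * (LaurentPolynomial.C εb * T cb)) * (invo v₀ * invo b) := by
      ring
    rw [h1, CT_mul_CT, show εg * εb * εb = εg * (εb * εb) by ring, sgn_sq hsb,
      show cg - cb + cb = cg by ring, mul_one]
  refine ⟨u, v, ?_, sy_average _ _ (sgn_sq (sgn_mul hsg hsa)) u₀,
    sy_average _ _ (sgn_sq (sgn_mul hsg hsb)) v₀⟩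
  have h1 : u * a + v * b = LaurentPolynomial.C (2⁻¹ : ℂ) *
      ((u₀ * a + v₀ * b) + (LaurentPolynomial.C εg * T cg * invo (u₀ * a)
        + LaurentPolynomial.C εg * T cg * invo (v₀ * b))) := by
    rw [hu, hv, ← hSua, ← hSvb]
    ring
  rw [h1, hbez]
  have h2 : LaurentPolynomial.C εg * T cg * invo (u₀ * a)
      + LaurentPolynomial.C εg * T cg * invo (v₀ * b)
      = LaurentPolynomial.C εg * T cg * invo (u₀ * a + v₀ * b) := by
    rw [map_add invo]; ring
  rw [h2, hbez, ← hg]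
  have h3 : (LaurentPolynomial.C (2:ℂ)) * g = g + g := by
    have h5 : (LaurentPolynomial.C (2:ℂ)) = LaurentPolynomial.C 1 + LaurentPolynomial.C 1 := by
      rw [← map_add]
      norm_num
    rw [h5]
    simp [add_mul]
  calc LaurentPolynomial.C (2⁻¹:ℂ) * (g + g)
      = LaurentPolynomial.C (2⁻¹:ℂ) * (LaurentPolynomial.C (2:ℂ) * g) := by rw [h3]
    _ = (LaurentPolynomial.C (2⁻¹:ℂ) * LaurentPolynomial.C (2:ℂ)) * g := by ring
    _ = g := by
        rw [← _root_.map_mul]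
        norm_num

/-- A Bezout gcd of two symmetric Laurent polynomials, with symmetry. -/
lemma exists_sym_gcd {a b : LP} {εa εb : ℂ} {ca cb : ℤ}
    (hsa : Sgn εa) (hsb : Sgn εb) (ha : Sy εa ca a) (hb : Sy εb cb b)
    (hab : a ≠ 0 ∨ b ≠ 0) :
    ∃ (g u v : LP) (εg : ℂ) (cg : ℤ), Sgn εg ∧ Sy εg cg g ∧ g ≠ 0 ∧
      g ∣ a ∧ g ∣ b ∧ u * a + v * b = g ∧
      Sy (εg * εa) (cg - ca) u ∧ Sy (εg * εb) (cg - cb) v := by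
  obtain ⟨g, u₀, v₀, hga, hgb, hbez, hgne'⟩ := exists_bezout_gcd a b
  have hgne : g ≠ 0 := hgne' hab
  have hgreat : ∀ e : LP, e ∣ a → e ∣ b → e ∣ g := by
    intro e h1 h2
    rw [← hbez]
    exact dvd_add (h1.mul_left u₀) (h2.mul_left v₀)
  -- the involution anchored at the type of `a`
  set S : LP → LP := fun x => LaurentPolynomial.C εa * T ca * invo x with hS
  have hSdvd : ∀ {x y : LP}, x ∣ y → S x ∣ S y := by
    intro x y h
    exact sy_dvd_invo h
  have hSa : S a = a := ha.symm
  have hSb : S b = LaurentPolynomial.C (εa * εb) * T (ca - cb) * b := by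
    show LaurentPolynomial.C εa * T ca * invo b = _
    rw [invo_eq_of_sy hsb hb, T_sub]
    rw [_root_.map_mul]
    ring
  have hSg_dvd_g : S g ∣ g := by
    apply hgreat
    · have := hSdvd hga
      rw [hSa] at this
      exact this
    · have h1 := hSdvd hgb
      rw [hSb] at h1
      obtain ⟨w, hw⟩ := h1
      -- S g ∣ unit * b  implies  S g ∣ b
      refine ⟨LaurentPolynomial.C (εa * εb) * T (cb - ca) * w, ?_⟩
      have h2 := congrArg (fun x => LaurentPolynomial.C (εa * εb) * T (cb - ca) * x) hw
      have h3 : LaurentPolynomial.C (εa * εb) * T (cb - ca) *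
          (LaurentPolynomial.C (εa * εb) * T (ca - cb) * b) = b := by
        have e1 : LaurentPolynomial.C (εa * εb) * T (cb - ca) *
            (LaurentPolynomial.C (εa * εb) * T (ca - cb) * b)
            = ((LaurentPolynomial.C (εa*εb) * T (cb-ca)) * (LaurentPolynomial.C (εa*εb) * T (ca-cb))) * b := by
          ring
        rw [e1, CT_mul_CT]
        have e2 : (εa * εb) * (εa * εb) = 1 := sgn_sq (sgn_mul hsa hsb)
        rw [e2, show (cb - ca) + (ca - cb) = 0 by ring, T_zero]
        simp
      rw [h3] at h2
      rw [h2]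
      ring
  have hg_dvd_Sg : g ∣ S g := by
    obtain ⟨w, hw⟩ := hSg_dvd_g
    -- apply S to hw : g = S g * w
    have h1 : S g = S (S g * w) := by rw [← hw]
    have h2 : S (S g * w) = g * invo w := by
      show LaurentPolynomial.C εa * T ca * invo (S g * w) = _
      rw [_root_.map_mul]
      have h3 : LaurentPolynomial.C εa * T ca * (invo (S g) * invo w)
          = (LaurentPolynomial.C εa * T ca * invo (S g)) * invo w := by ring
      rw [h3]
      congr 1
      -- S (S g) = g
      show S (S g) = g
      rw [hS]
      simp only
      rw [_root_.map_mul, _root_.map_mul, invo_C, invo_T, invo_invo]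
      have h4 : LaurentPolynomial.C εa * T ca * (LaurentPolynomial.C εa * T (-ca) * g)
          = ((LaurentPolynomial.C εa * T ca) * (LaurentPolynomial.C εa * T (-ca))) * g := by ring
      rw [h4, CT_mul_CT, sgn_sq hsa, add_neg_cancel, T_zero]
      simp
    exact ⟨invo w, by rw [h1, h2]⟩
  -- associated: S g = g * w', with w' a unit, in fact a monomial
  obtain ⟨w, hw⟩ := hSg_dvd_g
  obtain ⟨w', hw'⟩ := hg_dvd_Sg
  have hww' : w' * w = 1 := by
    have h1 : g * (w' * w) = g * 1 := by
      rw [mul_one]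
      calc g * (w' * w) = (g * w') * w := by ring
      _ = S g * w := by rw [← hw']
      _ = g := by rw [← hw]
    exact mul_left_cancel₀ hgne h1
  obtain ⟨lam, k, hlam, hwlam⟩ := unit_is_monomial hww'
  have hinvog : invo g = LaurentPolynomial.C (εa * lam) * T (k - ca) * g := by
    have h1 : invo g = LaurentPolynomial.C εa * T (-ca) * S g := by
      rw [hS]
      simp only
      have h2 : LaurentPolynomial.C εa * T (-ca) * (LaurentPolynomial.C εa * T ca * invo g)
          = ((LaurentPolynomial.C εa * T (-ca)) * (LaurentPolynomial.C εa * T ca)) * invo g := by ring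
      rw [h2, CT_mul_CT, sgn_sq hsa, neg_add_cancel, T_zero]
      simp
    rw [h1, hw', hwlam]
    have h3 : LaurentPolynomial.C εa * T (-ca) * (g * (LaurentPolynomial.C lam * T k))
        = ((LaurentPolynomial.C εa * T (-ca)) * (LaurentPolynomial.C lam * T k)) * g := by ring
    rw [h3, CT_mul_CT, show -ca + k = k - ca by ring]
  have hsq : (εa * lam) * (εa * lam) = 1 := by
    have h2 := congrArg invo hinvog
    rw [_root_.map_mul, _root_.map_mul, invo_C, invo_T, invo_invo] at h2
    rw [hinvog] at h2
    have h3 : LaurentPolynomial.C (εa * lam) * T (-(k - ca)) *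
        (LaurentPolynomial.C (εa * lam) * T (k - ca) * g)
        = LaurentPolynomial.C ((εa * lam) * (εa * lam)) * g := by
      have h4 : LaurentPolynomial.C (εa * lam) * T (-(k - ca)) *
          (LaurentPolynomial.C (εa * lam) * T (k - ca) * g)
          = ((LaurentPolynomial.C (εa*lam) * T (-(k-ca))) * (LaurentPolynomial.C (εa*lam) * T (k-ca))) * g := by
        ring
      rw [h4, CT_mul_CT, neg_add_cancel, T_zero]
      ring
    rw [h3] at h2
    exact C_mul_cancel hgne h2.symm
  have hsgng : Sgn (εa * lam) := mul_self_eq_one_iff.mp hsq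
  have hsyg : Sy (εa * lam) (ca - k) g := by
    show g = LaurentPolynomial.C (εa * lam) * T (ca - k) * invo g
    rw [hinvog]
    have h1 : LaurentPolynomial.C (εa*lam) * T (ca-k) * (LaurentPolynomial.C (εa * lam) * T (k - ca) * g)
        = ((LaurentPolynomial.C (εa*lam) * T (ca-k)) * (LaurentPolynomial.C (εa*lam) * T (k - ca))) * g := by
      ring
    rw [h1, CT_mul_CT, hsq, show (ca - k) + (k - ca) = 0 by ring, T_zero]
    simp
  obtain ⟨u, v, hbez2, hsyu, hsyv⟩ := sym_bezout_coeffs hsa hsb hsgng ha hb hsyg hbez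
  exact ⟨g, u, v, εa * lam, ca - k, hsgng, hsyg, hgne, hga, hgb, hbez2, hsyu, hsyv⟩

/-! ### Matrices with typed compatible symmetry -/

/-- Typed compatible symmetry. -/
def CS (ε : Fin 2 → ℂ) (c : Fin 2 → ℤ) (ε' : Fin 2 → ℂ) (c' : Fin 2 → ℤ)
    (A : Matrix (Fin 2) (Fin 2) LP) : Prop :=
  ∀ j k, Sy (ε j * ε' k) (c' k - c j) (A j k)

lemma compatSym_of_cs {ε ε' : Fin 2 → ℂ} {c c' : Fin 2 → ℤ} {A : Matrix (Fin 2) (Fin 2) LP}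
    (hsε : ∀ j, Sgn (ε j)) (hsε' : ∀ k, Sgn (ε' k)) (h : CS ε c ε' c' A) : CompatSym A :=
  ⟨ε, ε', c, c', hsε, hsε', fun j k => (symT_iff_sy _ _ _).mpr (h j k)⟩

lemma cs_of_compatSym {A : Matrix (Fin 2) (Fin 2) LP} (h : CompatSym A) :
    ∃ ε c ε' c', (∀ j, Sgn (ε j)) ∧ (∀ k, Sgn (ε' k)) ∧ CS ε c ε' c' A := by
  obtain ⟨ε, ε', c, c', h1, h2, h3⟩ := h
  exact ⟨ε, c, ε', c', h1, h2, fun j k => (symT_iff_sy _ _ _).mp (h3 j k)⟩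

lemma sy_congr {ε ε₂ : ℂ} {c c₂ : ℤ} {u : LP} (hε : ε = ε₂) (hc : c = c₂)
    (h : Sy ε c u) : Sy ε₂ c₂ u := by rw [← hε, ← hc]; exact h

lemma sy_one : Sy 1 0 (1 : LP) := by
  show (1 : LP) = _
  rw [T_zero, _root_.map_one invo, show LaurentPolynomial.C (1 : ℂ) = 1 from _root_.map_one _]
  simp

lemma mul_apply2 (M N : Matrix (Fin 2) (Fin 2) LP) (j k : Fin 2) :
    (M * N) j k = M j 0 * N 0 k + M j 1 * N 1 k := by
  rw [Matrix.mul_apply, Fin.sum_univ_two]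

lemma cs_mul {θ ε ε' : Fin 2 → ℂ} {r c c' : Fin 2 → ℤ} {P A : Matrix (Fin 2) (Fin 2) LP}
    (hsε : ∀ j, Sgn (ε j)) (hP : CS θ r ε c P) (hA : CS ε c ε' c' A) :
    CS θ r ε' c' (P * A) := by
  intro j l
  rw [mul_apply2]
  apply sy_add
  · have h := sy_mul (hP j 0) (hA 0 l)
    refine sy_congr ?_ (by ring) h
    have h2 := sgn_sq (hsε 0)
    linear_combination (θ j * ε' l) * h2
  · have h := sy_mul (hP j 1) (hA 1 l)
    refine sy_congr ?_ (by ring) h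
    have h2 := sgn_sq (hsε 1)
    linear_combination (θ j * ε' l) * h2

lemma strongInv_mul {P Q : Matrix (Fin 2) (Fin 2) LP} (hP : StrongInv P) (hQ : StrongInv Q) :
    StrongInv (P * Q) := by
  obtain ⟨lp, kp, hlp, hdp⟩ := hP
  obtain ⟨lq, kq, hlq, hdq⟩ := hQ
  exact ⟨lp * lq, kp + kq, mul_ne_zero hlp hlq, by
    rw [Matrix.det_mul, hdp, hdq, CT_mul_CT]⟩

lemma strongInv_one : StrongInv (1 : Matrix (Fin 2) (Fin 2) LP) :=
  ⟨1, 0, one_ne_zero, by simp⟩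

lemma strongInv_of_det_one {P : Matrix (Fin 2) (Fin 2) LP} (h : P.det = 1) : StrongInv P :=
  ⟨1, 0, one_ne_zero, by rw [h]; simp⟩

lemma mat2_eq_diagonal {M : Matrix (Fin 2) (Fin 2) LP} (h10 : M 1 0 = 0) (h01 : M 0 1 = 0) :
    M = Matrix.diagonal ![M 0 0, M 1 1] := by
  ext j k
  fin_cases j <;> fin_cases k <;>
    simp [Matrix.diagonal_apply, h10, h01]

/-- The swap permutation of `Fin 2`. -/
def sw : Fin 2 → Fin 2 := ![1, 0]

/-- The swap matrix. -/
def swapM : Matrix (Fin 2) (Fin 2) LP := !![0, 1; 1, 0]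

lemma sw_sw (k : Fin 2) : sw (sw k) = k := by fin_cases k <;> rfl

lemma swapM_mul (B : Matrix (Fin 2) (Fin 2) LP) (j k : Fin 2) :
    (swapM * B) j k = B (sw j) k := by
  rw [mul_apply2]
  fin_cases j <;> simp [swapM, sw]

lemma mul_swapM (B : Matrix (Fin 2) (Fin 2) LP) (j k : Fin 2) :
    (B * swapM) j k = B j (sw k) := by
  rw [mul_apply2]
  fin_cases k <;> simp [swapM, sw]

lemma strongInv_swapM : StrongInv swapM := by
  refine ⟨-1, 0, by norm_num, ?_⟩
  rw [swapM, Matrix.det_fin_two_of]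
  simp

lemma cs_swapM_mul {ε ε' : Fin 2 → ℂ} {c c' : Fin 2 → ℤ} {B : Matrix (Fin 2) (Fin 2) LP}
    (h : CS ε c ε' c' B) : CS (ε ∘ sw) (c ∘ sw) ε' c' (swapM * B) := by
  intro j k
  rw [swapM_mul]
  exact h (sw j) k

lemma cs_mul_swapM {ε ε' : Fin 2 → ℂ} {c c' : Fin 2 → ℤ} {B : Matrix (Fin 2) (Fin 2) LP}
    (h : CS ε c ε' c' B) : CS ε c (ε' ∘ sw) (c' ∘ sw) (B * swapM) := by
  intro j k
  rw [mul_swapM]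
  exact h j (sw k)

lemma swapM_apply (j k : Fin 2) : swapM j k = if k = sw j then 1 else 0 := by
  fin_cases j <;> fin_cases k <;> simp [swapM, sw]

lemma cs_swapM {ε : Fin 2 → ℂ} {c : Fin 2 → ℤ} (hs : ∀ j, Sgn (ε j)) :
    CS (ε ∘ sw) (c ∘ sw) ε c swapM := by
  intro j k
  rw [swapM_apply]
  by_cases h : k = sw j
  · rw [if_pos h, h]
    exact sy_congr (sgn_sq (hs (sw j))).symm (by show (0:ℤ) = c (sw j) - (c ∘ sw) j; show (0:ℤ) = c (sw j) - c (sw j); ring) sy_one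
  · rw [if_neg h]
    exact sy_zero _ _

lemma cs_one {ε : Fin 2 → ℂ} {c : Fin 2 → ℤ} (hs : ∀ j, Sgn (ε j)) :
    CS ε c ε c (1 : Matrix (Fin 2) (Fin 2) LP) := by
  intro j k
  by_cases h : j = k
  · subst h
    rw [show (1 : Matrix (Fin 2) (Fin 2) LP) j j = 1 from Matrix.one_apply_eq j]
    exact sy_congr (sgn_sq (hs j)).symm (by ring) sy_one
  · rw [Matrix.one_apply_ne h]
    exact sy_zero _ _

/-! ### 2×2 entry lemmas -/

lemma m2_00 (a b c d : LP) : (!![a, b; c, d] : Matrix (Fin 2) (Fin 2) LP) 0 0 = a := rfl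
lemma m2_01 (a b c d : LP) : (!![a, b; c, d] : Matrix (Fin 2) (Fin 2) LP) 0 1 = b := rfl
lemma m2_10 (a b c d : LP) : (!![a, b; c, d] : Matrix (Fin 2) (Fin 2) LP) 1 0 = c := rfl
lemma m2_11 (a b c d : LP) : (!![a, b; c, d] : Matrix (Fin 2) (Fin 2) LP) 1 1 = d := rfl

lemma cs_of_entries {ε ε' : Fin 2 → ℂ} {c c' : Fin 2 → ℤ} {M : Matrix (Fin 2) (Fin 2) LP}
    (h00 : Sy (ε 0 * ε' 0) (c' 0 - c 0) (M 0 0))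
    (h01 : Sy (ε 0 * ε' 1) (c' 1 - c 0) (M 0 1))
    (h10 : Sy (ε 1 * ε' 0) (c' 0 - c 1) (M 1 0))
    (h11 : Sy (ε 1 * ε' 1) (c' 1 - c 1) (M 1 1)) : CS ε c ε' c' M := by
  intro j k
  fin_cases j <;> fin_cases k
  · exact h00
  · exact h01
  · exact h10
  · exact h11

/-- The main inductive diagonalization lemma, assuming the corner is nonzero. -/
lemma smith_corner : ∀ (n : ℕ) (B : Matrix (Fin 2) (Fin 2) LP) (ε ε' : Fin 2 → ℂ)
    (c c' : Fin 2 → ℤ), (∀ j, Sgn (ε j)) → (∀ k, Sgn (ε' k)) → CS ε c ε' c' B →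
    B 0 0 ≠ 0 → meas (B 0 0) ≤ n →
    ∃ (P Q : Matrix (Fin 2) (Fin 2) LP) (θ θ' : Fin 2 → ℂ) (r r' : Fin 2 → ℤ),
      (∀ j, Sgn (θ j)) ∧ (∀ k, Sgn (θ' k)) ∧ CS θ r ε c P ∧ CS ε' c' θ' r' Q ∧
      StrongInv P ∧ StrongInv Q ∧
      P * B * Q = Matrix.diagonal ![(P * B * Q) 0 0, (P * B * Q) 1 1] := by
  intro n
  induction n using Nat.strong_induction_on with
  | _ n IH =>
  intro B ε ε' c c' hsε hsε' hB hx hm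
  have hsyx : Sy (ε 0 * ε' 0) (c' 0 - c 0) (B 0 0) := hB 0 0
  have hsyb : Sy (ε 1 * ε' 0) (c' 0 - c 1) (B 1 0) := hB 1 0
  have hsyp : Sy (ε 0 * ε' 1) (c' 1 - c 0) (B 0 1) := hB 0 1
  by_cases hxb : B 0 0 ∣ B 1 0
  · by_cases hxp : B 0 0 ∣ B 0 1
    · -- terminal case : clear the off-diagonal entries
      obtain ⟨wb, hwb⟩ := hxb
      obtain ⟨wp, hwp⟩ := hxp
      have hsywb : Sy (ε 1 * ε 0) (c 0 - c 1) wb := by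
        have h := sy_of_mul_left hx (sgn_mul (hsε 0) (hsε' 0)) hsyb hsyx hwb
        refine sy_congr ?_ (by ring) h
        have h2 := sgn_sq (hsε' 0)
        linear_combination (ε 1 * ε 0) * h2
      have hsywp : Sy (ε' 0 * ε' 1) (c' 1 - c' 0) wp := by
        have h := sy_of_mul_left hx (sgn_mul (hsε 0) (hsε' 0)) hsyp hsyx hwp
        refine sy_congr ?_ (by ring) h
        have h2 := sgn_sq (hsε 0)
        linear_combination (ε' 0 * ε' 1) * h2
      refine ⟨!![1, 0; -wb, 1], !![1, -wp; 0, 1], ε, ε', c, c', hsε, hsε', ?_, ?_, ?_, ?_, ?_⟩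
      · -- CS of the row operation
        refine cs_of_entries ?_ ?_ ?_ ?_
        · rw [m2_00]
          exact sy_congr (sgn_sq (hsε 0)).symm (by ring) sy_one
        · rw [m2_01]; exact sy_zero _ _
        · rw [m2_10]
          exact sy_neg hsywb
        · rw [m2_11]
          exact sy_congr (sgn_sq (hsε 1)).symm (by ring) sy_one
      · refine cs_of_entries ?_ ?_ ?_ ?_
        · rw [m2_00]
          exact sy_congr (sgn_sq (hsε' 0)).symm (by ring) sy_one
        · rw [m2_01]
          exact sy_neg hsywp
        · rw [m2_10]; exact sy_zero _ _
        · rw [m2_11]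
          exact sy_congr (sgn_sq (hsε' 1)).symm (by ring) sy_one
      · apply strongInv_of_det_one
        rw [Matrix.det_fin_two_of]
        simp
      · apply strongInv_of_det_one
        rw [Matrix.det_fin_two_of]
        simp
      · apply mat2_eq_diagonal
        · simp only [mul_apply2, m2_00, m2_01, m2_10, m2_11]
          linear_combination hwb
        · simp only [mul_apply2, m2_00, m2_01, m2_10, m2_11]
          linear_combination hwp
  -- recursive cases
    · -- column reduction via symmetric Bezout (x does not divide B 0 1)
      obtain ⟨g, u, v, εg, cg, hsgng, hsyg, hgne, hgx, hgp, hbez, hsyu, hsyv⟩ :=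
        exists_sym_gcd (sgn_mul (hsε 0) (hsε' 0)) (sgn_mul (hsε 0) (hsε' 1)) hsyx hsyp (Or.inl hx)
      obtain ⟨wx, hwx⟩ := hgx
      obtain ⟨wp, hwp⟩ := hgp
      have hsywx : Sy ((ε 0 * ε' 0) * εg) ((c' 0 - c 0) - cg) wx :=
        sy_of_mul_left hgne hsgng hsyx hsyg hwx
      have hsywp : Sy ((ε 0 * ε' 1) * εg) ((c' 1 - c 0) - cg) wp :=
        sy_of_mul_left hgne hsgng hsyp hsyg hwp
      have hdet : (!![u, -wp; v, wx] : Matrix (Fin 2) (Fin 2) LP).det = 1 := by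
        rw [Matrix.det_fin_two_of]
        have h1 : (u * wx - (-wp) * v) * g = 1 * g := by
          have e1 : (u * wx - (-wp) * v) * g = u * (g * wx) + v * (g * wp) := by ring
          rw [e1, ← hwx, ← hwp, one_mul]
          exact hbez
        exact mul_right_cancel₀ hgne h1
      have hcsQ₁ : CS ε' c' ![εg * ε 0, ε 0 * ε' 0 * ε' 1 * εg]
          ![cg + c 0, c' 0 + c' 1 - c 0 - cg] (!![u, -wp; v, wx]) := by
        refine cs_of_entries ?_ ?_ ?_ ?_
        · rw [m2_00]
          exact sy_congr (by simp only [Matrix.cons_val_zero, Matrix.cons_val_one, Matrix.head_cons]; ring) (by show cg - (c' 0 - c 0) = cg + c 0 - c' 0; ring) hsyu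
        · rw [m2_01]
          refine sy_congr ?_ (by show (c' 1 - c 0) - cg = c' 0 + c' 1 - c 0 - cg - c' 0; ring)
            (sy_neg hsywp)
          simp only [Matrix.cons_val_zero, Matrix.cons_val_one, Matrix.head_cons]
          have h2 := sgn_sq (hsε' 0)
          linear_combination (-(ε 0 * ε' 1 * εg)) * h2
        · rw [m2_10]
          exact sy_congr (by simp only [Matrix.cons_val_zero, Matrix.cons_val_one, Matrix.head_cons]; ring) (by show cg - (c' 1 - c 0) = cg + c 0 - c' 1; ring) hsyv
        · rw [m2_11]
          refine sy_congr ?_ (by show (c' 0 - c 0) - cg = c' 0 + c' 1 - c 0 - cg - c' 1; ring) hsywx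
          simp only [Matrix.cons_val_zero, Matrix.cons_val_one, Matrix.head_cons]
          have h2 := sgn_sq (hsε' 1)
          linear_combination (-(ε 0 * ε' 0 * εg)) * h2
      have hsθq : ∀ k, Sgn ((![εg * ε 0, ε 0 * ε' 0 * ε' 1 * εg] : Fin 2 → ℂ) k) := by
        intro k
        fin_cases k
        · exact sgn_mul hsgng (hsε 0)
        · exact sgn_mul (sgn_mul (sgn_mul (hsε 0) (hsε' 0)) (hsε' 1)) hsgng
      have hcsB₂ : CS ε c ![εg * ε 0, ε 0 * ε' 0 * ε' 1 * εg]
          ![cg + c 0, c' 0 + c' 1 - c 0 - cg] (B * !![u, -wp; v, wx]) :=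
        cs_mul hsε' hB hcsQ₁
      have hB₂00 : (B * !![u, -wp; v, wx]) 0 0 = g := by
        rw [mul_apply2, m2_00, m2_10]
        linear_combination hbez
      have hwxne : wx ≠ 0 := by
        rintro rfl
        rw [mul_zero] at hwx
        exact hx hwx
      have hmle : meas g < meas (B 0 0) := by
        have h1 := meas_mul hgne hwxne
        rw [← hwx] at h1
        rcases Nat.lt_or_ge (meas g) (meas (B 0 0)) with h | h
        · exact h
        · exfalso
          have h2 : meas g = meas (B 0 0) := by omega
          have h3 := dvd_of_dvd_of_meas_eq hx ⟨wx, hwx⟩ h2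
          exact hxp (h3.trans ⟨wp, hwp⟩)
      obtain ⟨P₂, Q₂, θ, θ', r, r', hsθ, hsθ', hcsP₂, hcsQ₂, hsiP₂, hsiQ₂, hdiag⟩ :=
        IH (meas g) (lt_of_lt_of_le hmle hm) (B * !![u, -wp; v, wx]) ε
          ![εg * ε 0, ε 0 * ε' 0 * ε' 1 * εg] c ![cg + c 0, c' 0 + c' 1 - c 0 - cg]
          hsε hsθq hcsB₂ (by rw [hB₂00]; exact hgne) (by rw [hB₂00])
      refine ⟨P₂, !![u, -wp; v, wx] * Q₂, θ, θ', r, r', hsθ, hsθ', hcsP₂,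
        cs_mul hsθq hcsQ₁ hcsQ₂, hsiP₂, strongInv_mul (strongInv_of_det_one hdet) hsiQ₂, ?_⟩
      have hassoc : P₂ * B * (!![u, -wp; v, wx] * Q₂) = P₂ * (B * !![u, -wp; v, wx]) * Q₂ := by
        rw [mul_assoc, mul_assoc, mul_assoc]
      rw [hassoc]
      exact hdiag
  · -- row reduction via symmetric Bezout (x does not divide B 1 0)
    obtain ⟨g, u, v, εg, cg, hsgng, hsyg, hgne, hgx, hgb, hbez, hsyu, hsyv⟩ :=
      exists_sym_gcd (sgn_mul (hsε 0) (hsε' 0)) (sgn_mul (hsε 1) (hsε' 0)) hsyx hsyb (Or.inl hx)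
    obtain ⟨wx, hwx⟩ := hgx
    obtain ⟨wb, hwb⟩ := hgb
    have hsywx : Sy ((ε 0 * ε' 0) * εg) ((c' 0 - c 0) - cg) wx :=
      sy_of_mul_left hgne hsgng hsyx hsyg hwx
    have hsywb : Sy ((ε 1 * ε' 0) * εg) ((c' 0 - c 1) - cg) wb :=
      sy_of_mul_left hgne hsgng hsyb hsyg hwb
    have hdet : (!![u, v; -wb, wx] : Matrix (Fin 2) (Fin 2) LP).det = 1 := by
      rw [Matrix.det_fin_two_of]
      have h1 : (u * wx - v * (-wb)) * g = 1 * g := by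
        have e1 : (u * wx - v * (-wb)) * g = u * (g * wx) + v * (g * wb) := by ring
        rw [e1, ← hwx, ← hwb, one_mul]
        exact hbez
      exact mul_right_cancel₀ hgne h1
    have hcsP₁ : CS ![εg * ε' 0, ε 0 * ε 1 * ε' 0 * εg]
        ![c' 0 - cg, c 0 + c 1 - c' 0 + cg] ε c (!![u, v; -wb, wx]) := by
      refine cs_of_entries ?_ ?_ ?_ ?_
      · rw [m2_00]
        exact sy_congr (by simp only [Matrix.cons_val_zero, Matrix.cons_val_one, Matrix.head_cons]; ring) (by show cg - (c' 0 - c 0) = c 0 - (c' 0 - cg); ring) hsyu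
      · rw [m2_01]
        exact sy_congr (by simp only [Matrix.cons_val_zero, Matrix.cons_val_one, Matrix.head_cons]; ring) (by show cg - (c' 0 - c 1) = c 1 - (c' 0 - cg); ring) hsyv
      · rw [m2_10]
        refine sy_congr ?_ (by show (c' 0 - c 1) - cg = c 0 - (c 0 + c 1 - c' 0 + cg); ring)
          (sy_neg hsywb)
        simp only [Matrix.cons_val_zero, Matrix.cons_val_one, Matrix.head_cons]
        have h2 := sgn_sq (hsε 0)
        linear_combination (-(ε 1 * ε' 0 * εg)) * h2
      · rw [m2_11]
        refine sy_congr ?_ (by show (c' 0 - c 0) - cg = c 1 - (c 0 + c 1 - c' 0 + cg); ring) hsywx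
        simp only [Matrix.cons_val_zero, Matrix.cons_val_one, Matrix.head_cons]
        have h2 := sgn_sq (hsε 1)
        linear_combination (-(ε 0 * ε' 0 * εg)) * h2
    have hsθb : ∀ j, Sgn ((![εg * ε' 0, ε 0 * ε 1 * ε' 0 * εg] : Fin 2 → ℂ) j) := by
      intro j
      fin_cases j
      · exact sgn_mul hsgng (hsε' 0)
      · exact sgn_mul (sgn_mul (sgn_mul (hsε 0) (hsε 1)) (hsε' 0)) hsgng
    have hcsB₁ : CS ![εg * ε' 0, ε 0 * ε 1 * ε' 0 * εg]
        ![c' 0 - cg, c 0 + c 1 - c' 0 + cg] ε' c' (!![u, v; -wb, wx] * B) :=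
      cs_mul hsε hcsP₁ hB
    have hB₁00 : (!![u, v; -wb, wx] * B) 0 0 = g := by
      rw [mul_apply2, m2_00, m2_01]
      exact hbez
    have hwxne : wx ≠ 0 := by
      rintro rfl
      rw [mul_zero] at hwx
      exact hx hwx
    have hmle : meas g < meas (B 0 0) := by
      have h1 := meas_mul hgne hwxne
      rw [← hwx] at h1
      rcases Nat.lt_or_ge (meas g) (meas (B 0 0)) with h | h
      · exact h
      · exfalso
        have h2 : meas g = meas (B 0 0) := by omega
        have h3 := dvd_of_dvd_of_meas_eq hx ⟨wx, hwx⟩ h2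
        exact hxb (h3.trans ⟨wb, hwb⟩)
    obtain ⟨P₂, Q₂, θ, θ', r, r', hsθ, hsθ', hcsP₂, hcsQ₂, hsiP₂, hsiQ₂, hdiag⟩ :=
      IH (meas g) (lt_of_lt_of_le hmle hm) (!![u, v; -wb, wx] * B)
        ![εg * ε' 0, ε 0 * ε 1 * ε' 0 * εg] ε' ![c' 0 - cg, c 0 + c 1 - c' 0 + cg] c'
        hsθb hsε' hcsB₁ (by rw [hB₁00]; exact hgne) (by rw [hB₁00])
    refine ⟨P₂ * !![u, v; -wb, wx], Q₂, θ, θ', r, r', hsθ, hsθ',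
      cs_mul hsθb hcsP₂ hcsP₁, hcsQ₂, strongInv_mul hsiP₂ (strongInv_of_det_one hdet),
      hsiQ₂, ?_⟩
    have hassoc : P₂ * !![u, v; -wb, wx] * B * Q₂ = P₂ * (!![u, v; -wb, wx] * B) * Q₂ := by
      rw [mul_assoc P₂]
    rw [hassoc]
    exact hdiag

lemma cs_swapM' {ε : Fin 2 → ℂ} {c : Fin 2 → ℤ} (hs : ∀ j, Sgn (ε j)) :
    CS ε c (ε ∘ sw) (c ∘ sw) swapM := by
  intro j k
  rw [swapM_apply]
  by_cases h : k = sw j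
  · rw [if_pos h, h]
    refine sy_congr ?_ ?_ sy_one
    · rw [show ((ε ∘ sw) (sw j)) = ε j from congrArg ε (sw_sw j)]
      exact (sgn_sq (hs j)).symm
    · rw [show ((c ∘ sw) (sw j)) = c j from congrArg c (sw_sw j)]
      ring
  · rw [if_neg h]
    exact sy_zero _ _

lemma smith_row0 (B : Matrix (Fin 2) (Fin 2) LP) (ε ε' : Fin 2 → ℂ) (c c' : Fin 2 → ℤ)
    (hsε : ∀ j, Sgn (ε j)) (hsε' : ∀ k, Sgn (ε' k)) (hB : CS ε c ε' c' B)
    (hk : ∃ k, B 0 k ≠ 0) :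
    ∃ (P Q : Matrix (Fin 2) (Fin 2) LP) (θ θ' : Fin 2 → ℂ) (r r' : Fin 2 → ℤ),
      (∀ j, Sgn (θ j)) ∧ (∀ k, Sgn (θ' k)) ∧ CS θ r ε c P ∧ CS ε' c' θ' r' Q ∧
      StrongInv P ∧ StrongInv Q ∧
      P * B * Q = Matrix.diagonal ![(P * B * Q) 0 0, (P * B * Q) 1 1] := by
  obtain ⟨k, hk⟩ := hk
  by_cases h0 : B 0 0 ≠ 0
  · exact smith_corner (meas (B 0 0)) B ε ε' c c' hsε hsε' hB h0 le_rfl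
  · have hk1 : B 0 1 ≠ 0 := by
      fin_cases k
      · exact absurd hk h0
      · exact hk
    have hcs' : CS ε c (ε' ∘ sw) (c' ∘ sw) (B * swapM) := cs_mul_swapM hB
    have h00 : (B * swapM) 0 0 = B 0 1 := mul_swapM B 0 0
    obtain ⟨P₂, Q₂, θ, θ', r, r', hsθ, hsθ', hcsP₂, hcsQ₂, siP, siQ, hdg⟩ :=
      smith_corner (meas (B 0 1)) (B * swapM) ε (ε' ∘ sw) c (c' ∘ sw) hsε
        (fun k => hsε' (sw k)) hcs' (by rw [h00]; exact hk1) (by rw [h00])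
    refine ⟨P₂, swapM * Q₂, θ, θ', r, r', hsθ, hsθ', hcsP₂,
      cs_mul (fun k => hsε' (sw k)) (cs_swapM' hsε') hcsQ₂, siP,
      strongInv_mul strongInv_swapM siQ, ?_⟩
    have hassoc : P₂ * B * (swapM * Q₂) = P₂ * (B * swapM) * Q₂ := by
      rw [mul_assoc, mul_assoc, mul_assoc]
    rw [hassoc]
    exact hdg

lemma smith_full (B : Matrix (Fin 2) (Fin 2) LP) (ε ε' : Fin 2 → ℂ) (c c' : Fin 2 → ℤ)
    (hsε : ∀ j, Sgn (ε j)) (hsε' : ∀ k, Sgn (ε' k)) (hB : CS ε c ε' c' B) :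
    ∃ (P Q : Matrix (Fin 2) (Fin 2) LP) (θ θ' : Fin 2 → ℂ) (r r' : Fin 2 → ℤ),
      (∀ j, Sgn (θ j)) ∧ (∀ k, Sgn (θ' k)) ∧ CS θ r ε c P ∧ CS ε' c' θ' r' Q ∧
      StrongInv P ∧ StrongInv Q ∧
      P * B * Q = Matrix.diagonal ![(P * B * Q) 0 0, (P * B * Q) 1 1] := by
  by_cases hB0 : B = 0
  · refine ⟨1, 1, ε, ε', c, c', hsε, hsε', cs_one hsε, cs_one hsε',
      strongInv_one, strongInv_one, ?_⟩
    apply mat2_eq_diagonal <;> simp [hB0]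
  · have hex : ∃ j k, B j k ≠ 0 := by
      by_contra h
      push_neg at h
      exact hB0 (Matrix.ext fun j k => (h j k).trans (Matrix.zero_apply j k).symm)
    obtain ⟨j, k, hjk⟩ := hex
    have hrow : (∃ k, B 0 k ≠ 0) ∨ (∃ k, B 1 k ≠ 0) := by
      fin_cases j
      · exact Or.inl ⟨k, hjk⟩
      · exact Or.inr ⟨k, hjk⟩
    rcases hrow with h | h
    · exact smith_row0 B ε ε' c c' hsε hsε' hB h
    · obtain ⟨k2, hk2⟩ := h
      have hcs' : CS (ε ∘ sw) (c ∘ sw) ε' c' (swapM * B) := cs_swapM_mul hB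
      have hrow0 : ∃ k, (swapM * B) 0 k ≠ 0 := ⟨k2, by rw [swapM_mul]; exact hk2⟩
      obtain ⟨P₂, Q₂, θ, θ', r, r', hsθ, hsθ', hcsP₂, hcsQ₂, siP, siQ, hdg⟩ :=
        smith_row0 (swapM * B) (ε ∘ sw) ε' (c ∘ sw) c' (fun j => hsε (sw j)) hsε' hcs' hrow0
      refine ⟨P₂ * swapM, Q₂, θ, θ', r, r', hsθ, hsθ',
        cs_mul (fun j => hsε (sw j)) hcsP₂ (cs_swapM hsε), hcsQ₂,
        strongInv_mul siP strongInv_swapM, siQ, ?_⟩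
      have hassoc : P₂ * swapM * B * Q₂ = P₂ * (swapM * B) * Q₂ := by
        rw [mul_assoc P₂]
      rw [hassoc]
      exact hdg

/-! ### Tools for the uniqueness ("moreover") part -/

lemma strongInv_inv {M : Matrix (Fin 2) (Fin 2) LP} (h : StrongInv M) :
    ∃ M' : Matrix (Fin 2) (Fin 2) LP, M * M' = 1 ∧ M' * M = 1 := by
  obtain ⟨l, k, hl, hdet⟩ := h
  have hu : (LaurentPolynomial.C l⁻¹ * T (-k)) * M.det = 1 := by
    rw [hdet, CT_mul_CT, inv_mul_cancel₀ hl, neg_add_cancel, T_zero]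
    simp
  refine ⟨(LaurentPolynomial.C l⁻¹ * T (-k)) • M.adjugate, ?_, ?_⟩
  · rw [Matrix.mul_smul, Matrix.mul_adjugate, smul_smul, hu, one_smul]
  · rw [Matrix.smul_mul, Matrix.adjugate_mul, smul_smul, hu, one_smul]

lemma dvd_all_left {d : LP} {M N : Matrix (Fin 2) (Fin 2) LP}
    (h : ∀ i j, d ∣ N i j) : ∀ i j, d ∣ (M * N) i j := by
  intro i j
  rw [mul_apply2]
  exact dvd_add ((h 0 j).mul_left _) ((h 1 j).mul_left _)

lemma dvd_all_right {d : LP} {M N : Matrix (Fin 2) (Fin 2) LP}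
    (h : ∀ i j, d ∣ M i j) : ∀ i j, d ∣ (M * N) i j := by
  intro i j
  rw [mul_apply2]
  exact dvd_add ((h i 0).mul_right _) ((h i 1).mul_right _)

lemma dvd_diagonal {d e₁ e₂ : LP} (h1 : d ∣ e₁) (h2 : d ∣ e₂) :
    ∀ i j, d ∣ (Matrix.diagonal ![e₁, e₂] : Matrix (Fin 2) (Fin 2) LP) i j := by
  intro i j
  by_cases h : i = j
  · subst h
    rw [Matrix.diagonal_apply_eq]
    fin_cases i
    · exact h1
    · exact h2
  · rw [Matrix.diagonal_apply_ne _ h]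
    exact dvd_zero d

lemma le_of_pow_dvd_mzIs {z₀ : ℂ} {u : LP} {m a : ℕ}
    (h : mzIs u z₀ m) (hd : zsub z₀ ^ a ∣ u) : a ≤ m := by
  by_contra h2
  exact h.2 ((pow_dvd_pow _ (by omega)).trans hd)
/-- normal form with compatible symmetry (Theorem 3.10 of the paper). -/
theorem normal_form_with_compatible_symmetry
    (A : Matrix (Fin 2) (Fin 2) LP) (hA : CompatSym A) :
    ∃ (P Q : Matrix (Fin 2) (Fin 2) LP) (e₁ e₂ : LP),
      StrongInv P ∧ StrongInv Q ∧ CompatSym P ∧ CompatSym Q ∧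
      HasSym e₁ ∧ HasSym e₂ ∧
      P * A * Q = Matrix.diagonal ![e₁, e₂] ∧
      (A.det ≠ 0 →
        ∀ (E F : Matrix (Fin 2) (Fin 2) LP) (d₁ d₂ : LP),
          StrongInv E → StrongInv F → d₁ ∣ d₂ →
          A = E * Matrix.diagonal ![d₁, d₂] * F →
          ∀ z₀ : ℂ, z₀ ≠ 0 →
            ∀ m₁ m₂ n₁ n₂ : ℕ,
              mzIs e₁ z₀ m₁ → mzIs e₂ z₀ m₂ → mzIs d₁ z₀ n₁ → mzIs d₂ z₀ n₂ →
              ((m₁ = n₁ ∧ m₂ = n₂) ∨ (m₁ = n₂ ∧ m₂ = n₁))) := by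
  obtain ⟨ε, c, ε', c', hsε, hsε', hcs⟩ := cs_of_compatSym hA
  obtain ⟨P, Q, θ, θ', r, r', hsθ, hsθ', hcsP, hcsQ, hsiP, hsiQ, hdiag⟩ :=
    smith_full A ε ε' c c' hsε hsε' hcs
  have hcsPA : CS θ r ε' c' (P * A) := cs_mul hsε hcsP hcs
  have hcsD : CS θ r θ' r' (P * A * Q) := cs_mul hsε' hcsPA hcsQ
  refine ⟨P, Q, (P * A * Q) 0 0, (P * A * Q) 1 1, hsiP, hsiQ,
    compatSym_of_cs hsθ hsε hcsP,
    compatSym_of_cs hsε' hsθ' hcsQ,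
    ⟨θ 0 * θ' 0, r' 0 - r 0, sgn_mul (hsθ 0) (hsθ' 0), (symT_iff_sy _ _ _).mpr (hcsD 0 0)⟩,
    ⟨θ 1 * θ' 1, r' 1 - r 1, sgn_mul (hsθ 1) (hsθ' 1), (symT_iff_sy _ _ _).mpr (hcsD 1 1)⟩,
    hdiag, ?_⟩
  intro _ E F d₁ d₂ hsiE hsiF hd12 hAEF z₀ hz m₁ m₂ n₁ n₂ hm₁ hm₂ hn₁ hn₂
  -- d₁ divides both diagonal entries
  have hd1diag : ∀ i j, d₁ ∣ (Matrix.diagonal ![d₁, d₂] : Matrix (Fin 2) (Fin 2) LP) i j :=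
    dvd_diagonal dvd_rfl hd12
  have hd1A : ∀ i j, d₁ ∣ A i j := by
    intro i j
    rw [hAEF]
    exact dvd_all_right (dvd_all_left hd1diag) i j
  have hd1e : ∀ i j, d₁ ∣ (P * A * Q) i j :=
    dvd_all_right (dvd_all_left hd1A)
  have hn₁m₁ : n₁ ≤ m₁ := le_of_pow_dvd_mzIs hm₁ (hn₁.1.trans (hd1e 0 0))
  have hn₁m₂ : n₁ ≤ m₂ := le_of_pow_dvd_mzIs hm₂ (hn₁.1.trans (hd1e 1 1))
  -- min m₁ m₂ ≤ n₁
  obtain ⟨P', hPP', hP'P⟩ := strongInv_inv hsiP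
  obtain ⟨Q', hQQ', hQ'Q⟩ := strongInv_inv hsiQ
  obtain ⟨E', hEE', hE'E⟩ := strongInv_inv hsiE
  obtain ⟨F', hFF', hF'F⟩ := strongInv_inv hsiF
  have hte : ∀ i j, zsub z₀ ^ (min m₁ m₂) ∣ (P * A * Q) i j := by
    intro i j
    by_cases h : i = j
    · subst h
      fin_cases i
      · exact (pow_dvd_pow _ (min_le_left m₁ m₂)).trans hm₁.1
      · exact (pow_dvd_pow _ (min_le_right m₁ m₂)).trans hm₂.1
    · rw [hdiag, Matrix.diagonal_apply_ne _ h]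
      exact dvd_zero _
  have hA_eq : P' * (P * A * Q) * Q' = A := by
    rw [mul_assoc P A Q, ← mul_assoc P' P (A * Q), hP'P, one_mul, mul_assoc A Q Q', hQQ',
      mul_one]
  have htA : ∀ i j, zsub z₀ ^ (min m₁ m₂) ∣ A i j := by
    intro i j
    rw [← hA_eq]
    exact dvd_all_right (dvd_all_left hte) i j
  have hD_eq : E' * A * F' = Matrix.diagonal ![d₁, d₂] := by
    rw [hAEF, mul_assoc E (Matrix.diagonal ![d₁, d₂]) F,
      ← mul_assoc E' E (Matrix.diagonal ![d₁, d₂] * F), hE'E, one_mul,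
      mul_assoc (Matrix.diagonal ![d₁, d₂]) F F', hFF', mul_one]
  have htD : zsub z₀ ^ (min m₁ m₂) ∣ d₁ := by
    have h1 := dvd_all_right (M := E' * A) (N := F') (dvd_all_left htA) 0 0
    rw [hD_eq] at h1
    simpa using h1
  have htn₁ : min m₁ m₂ ≤ n₁ := le_of_pow_dvd_mzIs hn₁ htD
  -- determinants: sum of multiplicities agree
  obtain ⟨lp, kp, hlp, hdp⟩ := hsiP
  obtain ⟨lq, kq, hlq, hdq⟩ := hsiQ
  obtain ⟨le, ke, hle, hde⟩ := hsiE
  obtain ⟨lf, kf, hlf, hdf⟩ := hsiF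
  have hdet1 : (P * A * Q).det = (P * A * Q) 0 0 * (P * A * Q) 1 1 := by
    conv_lhs => rw [hdiag]
    rw [Matrix.det_diagonal, Fin.prod_univ_two]
    simp
  have hdet2 : (P * A * Q).det =
      LaurentPolynomial.C ((lp * le) * (lf * lq)) * T ((kp + ke) + (kf + kq)) * (d₁ * d₂) := by
    rw [Matrix.det_mul, Matrix.det_mul, hAEF, Matrix.det_mul, Matrix.det_mul, hdp, hdq, hde,
      hdf, Matrix.det_diagonal, Fin.prod_univ_two]
    simp only [Matrix.cons_val_zero, Matrix.cons_val_one, Matrix.head_cons]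
    rw [show LaurentPolynomial.C lp * T kp *
        (LaurentPolynomial.C le * T ke * (d₁ * d₂) * (LaurentPolynomial.C lf * T kf)) *
        (LaurentPolynomial.C lq * T kq)
        = ((LaurentPolynomial.C lp * T kp) * (LaurentPolynomial.C le * T ke)) *
          ((LaurentPolynomial.C lf * T kf) * (LaurentPolynomial.C lq * T kq)) * (d₁ * d₂)
        from by ring]
    rw [CT_mul_CT, CT_mul_CT, CT_mul_CT]
  have hL : mzIs ((P * A * Q) 0 0 * (P * A * Q) 1 1) z₀ (m₁ + m₂) := mzIs_mul hz hm₁ hm₂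
  have hR : mzIs (LaurentPolynomial.C ((lp * le) * (lf * lq)) * T ((kp + ke) + (kf + kq))
      * (d₁ * d₂)) z₀ (n₁ + n₂) :=
    mzIs_monomial_mul _ (mul_ne_zero (mul_ne_zero hlp hle) (mul_ne_zero hlf hlq)) _
      (mzIs_mul hz hn₁ hn₂)
  have hee : (P * A * Q) 0 0 * (P * A * Q) 1 1 =
      LaurentPolynomial.C ((lp * le) * (lf * lq)) * T ((kp + ke) + (kf + kq)) * (d₁ * d₂) :=
    hdet1.symm.trans hdet2
  rw [hee] at hL
  have hsum : m₁ + m₂ = n₁ + n₂ := mzIs_unique hL hR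
  have hmin : min m₁ m₂ = n₁ := le_antisymm htn₁ (le_min hn₁m₁ hn₁m₂)
  omega

end QT
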